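/- Let d ≥ 1 and n = 2. Mechanism 1, which on profile (x_1, x_2) outputs the probability measure (1/4)δ_{x_1} + (1/4)δ_{x_2} + (1/2)δ_{(x_1+x_2)/2}, is group-strategyproof. -/

import Mathlib

open MeasureTheory ENNReal

noncomputable section

/-- Points in `d`-dimensional Euclidean space. -/
abbrev Pt (d : ℕ) : Type := EuclideanSpace ℝ (Fin d)

/-- Group-strategyproofness: for every profile, nonempty coalition, and deviation by
the coalition, some member of the coalition does not strictly gain. -/
def GroupStrategyproof {d n : ℕ} (f : (Fin n → Pt d) → Measure (Pt d)) : Prop :=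
  ∀ x x' : Fin n → Pt d, ∀ S : Finset (Fin n), S.Nonempty →
    (∀ i ∉ S, x' i = x i) →
    ∃ i ∈ S, ∫ y, ‖y - x i‖ ∂(f x') ≥ ∫ y, ‖y - x i‖ ∂(f x)

/-- Mechanism 1 for two agents: output `x 0` w.p. 1/4, `x 1` w.p. 1/4, and the
midpoint `(x 0 + x 1)/2` w.p. 1/2. -/
def mech1 {d : ℕ} (x : Fin 2 → Pt d) : Measure (Pt d) :=
  (1/4 : ℝ≥0∞) • Measure.dirac (x 0) + (1/4 : ℝ≥0∞) • Measure.dirac (x 1)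
    + (1/2 : ℝ≥0∞) • Measure.dirac ((2 : ℝ)⁻¹ • (x 0 + x 1))

lemma int_dirac {d : ℕ} (a p : Pt d) : Integrable (fun y => ‖y - p‖) (Measure.dirac a) := by
  refine ⟨(Continuous.norm (by continuity)).aestronglyMeasurable, ?_⟩
  simp [HasFiniteIntegral]

lemma mech1_integral {d : ℕ} (x : Fin 2 → Pt d) (p : Pt d) :
    ∫ y, ‖y - p‖ ∂(mech1 x)
      = (1/4) * ‖x 0 - p‖ + (1/4) * ‖x 1 - p‖ + (1/2) * ‖(2:ℝ)⁻¹ • (x 0 + x 1) - p‖ := by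
  unfold mech1
  rw [integral_add_measure (((int_dirac _ p).smul_measure (by norm_num)).add_measure
        ((int_dirac _ p).smul_measure (by norm_num)))
      ((int_dirac _ p).smul_measure (by norm_num)),
    integral_add_measure ((int_dirac _ p).smul_measure (by norm_num))
      ((int_dirac _ p).smul_measure (by norm_num))]
  rw [integral_smul_measure, integral_smul_measure, integral_smul_measure,
    integral_dirac, integral_dirac, integral_dirac]
  norm_num

lemma tri {d : ℕ} (a u v : Pt d) : ‖u - v‖ ≤ ‖a - u‖ + ‖a - v‖ := by
  have h := dist_triangle u a v
  simpa [dist_eq_norm, norm_sub_rev a u] using h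

lemma mid_eq {d : ℕ} (a b u : Pt d) :
    (2:ℝ)⁻¹ • (a + b) - u = (2:ℝ)⁻¹ • ((a - u) + (b - u)) := by
  module

lemma mid_norm {d : ℕ} (a b u : Pt d) :
    2 * ‖(2:ℝ)⁻¹ • (a + b) - u‖ = ‖(a - u) + (b - u)‖ := by
  rw [mid_eq, norm_smul]
  norm_num
  ring

/-- For `d ≥ 1` and `n = 2`, Mechanism 1 is group-strategyproof. -/
theorem mech1_group_strategyproof {d : ℕ} (hd : 1 ≤ d) :
    GroupStrategyproof (mech1 (d := d)) := by
  intro x x' S hS hfix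
  have hc0 := mech1_integral x (x 0)
  have hc1 := mech1_integral x (x 1)
  have hc0' := mech1_integral x' (x 0)
  have hc1' := mech1_integral x' (x 1)
  -- truthful costs
  have hm0 : ‖(2:ℝ)⁻¹ • (x 0 + x 1) - x 0‖ = 2⁻¹ * ‖x 1 - x 0‖ := by
    rw [mid_eq, norm_smul]; simp
  have hm1 : ‖(2:ℝ)⁻¹ • (x 0 + x 1) - x 1‖ = 2⁻¹ * ‖x 0 - x 1‖ := by
    rw [mid_eq, norm_smul]; simp
  by_cases h0 : (0 : Fin 2) ∈ S
  · by_cases h1 : (1 : Fin 2) ∈ S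
    · -- both in coalition: sum of costs cannot decrease
      by_cases hg : ∫ y, ‖y - x 0‖ ∂(mech1 x') ≥ ∫ y, ‖y - x 0‖ ∂(mech1 x)
      · exact ⟨0, h0, hg⟩
      · refine ⟨1, h1, ?_⟩
        push_neg at hg
        have t1 : ‖x 0 - x 1‖ ≤ ‖x' 0 - x 0‖ + ‖x' 0 - x 1‖ := tri _ _ _
        have t2 : ‖x 0 - x 1‖ ≤ ‖x' 1 - x 0‖ + ‖x' 1 - x 1‖ := tri _ _ _
        have t3 : ‖x 0 - x 1‖ ≤ ‖(2:ℝ)⁻¹ • (x' 0 + x' 1) - x 0‖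
            + ‖(2:ℝ)⁻¹ • (x' 0 + x' 1) - x 1‖ := tri _ _ _
        have hrev : ‖x 1 - x 0‖ = ‖x 0 - x 1‖ := norm_sub_rev _ _
        rw [hc0, hc0', hm0] at hg
        rw [hc1, hc1', hm1]
        simp only [sub_self, norm_zero] at *
        linarith
    · -- only agent 0 deviates
      refine ⟨0, h0, ?_⟩
      have hx1 : x' 1 = x 1 := hfix 1 h1
      rw [hc0, hc0', hm0, hx1]
      have key : ‖x 1 - x 0‖ - ‖x' 0 - x 0‖ ≤ 2 * ‖(2:ℝ)⁻¹ • (x' 0 + x 1) - x 0‖ := by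
        rw [mid_norm]
        have := norm_sub_le ((x' 0 - x 0) + (x 1 - x 0)) (x' 0 - x 0)
        simpa using this
      simp only [sub_self, norm_zero] at *
      linarith
  · by_cases h1 : (1 : Fin 2) ∈ S
    · -- only agent 1 deviates
      refine ⟨1, h1, ?_⟩
      have hx0 : x' 0 = x 0 := hfix 0 h0
      rw [hc1, hc1', hm1, hx0]
      have key : ‖x 0 - x 1‖ - ‖x' 1 - x 1‖ ≤ 2 * ‖(2:ℝ)⁻¹ • (x 0 + x' 1) - x 1‖ := by
        rw [mid_norm]
        have := norm_sub_le ((x 0 - x 1) + (x' 1 - x 1)) (x' 1 - x 1)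
        simpa [add_comm] using this
      simp only [sub_self, norm_zero] at *
      linarith
    · obtain ⟨i, hi⟩ := hS
      fin_cases i <;> [exact absurd hi h0; exact absurd hi h1]
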